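/- The integral ∫_0^∞ ln(1 - 1/cosh(x)) dx equals -3π²/8. -/

import Mathlib

open MeasureTheory Real Set
open scoped ENNReal NNReal

lemma basel_shift : HasSum (fun n : ℕ => (1:ℝ)/((n:ℝ)+1)^2) (π^2/6) := by
  have h := (hasSum_nat_add_iff' (f := fun n : ℕ => (1:ℝ)/(n:ℝ)^2) 1).mpr hasSum_zeta_two
  simpa using h

lemma exp_int (b : ℝ) (hb : 0 < b) : IntegrableOn (fun x => Real.exp (-(b*x))) (Set.Ioi 0) := by
  simpa [neg_mul] using exp_neg_integrableOn_Ioi 0 hb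

lemma exp_intval (b : ℝ) (hb : 0 < b) : ∫ x in Ioi (0:ℝ), Real.exp (-(b*x)) = 1/b := by
  have := MeasureTheory.integral_comp_mul_left_Ioi (fun x => Real.exp (-x)) 0 hb
  simp only [mul_zero, smul_eq_mul, integral_exp_neg_Ioi_zero, mul_one] at this
  simpa [one_div] using this

lemma pow_exp_eq (a : ℝ) (n : ℕ) :
    (fun x : ℝ => Real.exp (-(a*x)) ^ (n+1)) = (fun x => Real.exp (-((((n:ℝ)+1)*a)*x))) := by
  funext x
  rw [← Real.exp_nat_mul]
  push_cast
  ring_nf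

lemma J (a : ℝ) (ha : 0 < a) :
    IntegrableOn (fun x => Real.log (1 - Real.exp (-(a*x)))) (Set.Ioi 0) ∧
    ∫ x in Ioi (0:ℝ), Real.log (1 - Real.exp (-(a*x))) = -(π^2/(6*a)) := by
  set f : ℝ → ℝ := fun x => Real.log (1 - Real.exp (-(a*x))) with hf
  set F : ℕ → ℝ → ℝ := fun n x => -(Real.exp (-(a*x)) ^ (n+1) / ((n:ℝ)+1)) with hF
  have hb : ∀ n : ℕ, (0:ℝ) < ((n:ℝ)+1)*a := fun n => by positivity
  have hn1 : ∀ n : ℕ, (0:ℝ) < (n:ℝ)+1 := fun n => by positivity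
  have hFeq : ∀ n : ℕ, F n = fun x => -(Real.exp (-((((n:ℝ)+1)*a)*x)) / ((n:ℝ)+1)) := by
    intro n
    funext x
    simp only [hF]
    rw [congrFun (pow_exp_eq a n) x]
  have hFi : ∀ n, IntegrableOn (F n) (Set.Ioi 0) := by
    intro n
    rw [hFeq n]
    exact ((exp_int _ (hb n)).div_const ((n:ℝ)+1)).neg
  have hsum : ∀ x ∈ Ioi (0:ℝ), HasSum (fun n => F n x) (f x) := by
    intro x hx
    have hx0 : 0 < a * x := mul_pos ha hx
    have ht1 : Real.exp (-(a*x)) < 1 := Real.exp_lt_one_iff.mpr (by linarith)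
    have habs : |Real.exp (-(a*x))| < 1 := by
      rw [abs_of_pos (Real.exp_pos _)]; exact ht1
    have h := (Real.hasSum_pow_div_log_of_abs_lt_one habs).neg
    simpa [hF, hf] using h
  have hval : ∀ n : ℕ, ∫ x in Ioi (0:ℝ), F n x = -(1/(((n:ℝ)+1)^2*a)) := by
    intro n
    rw [hFeq n, integral_neg, integral_div, exp_intval _ (hb n)]
    field_simp
  have hnorm : ∀ n : ℕ, ∀ x ∈ Ioi (0:ℝ), ‖F n x‖ = -(F n x) := by
    intro n x _
    have h0 : 0 ≤ Real.exp (-(a*x)) ^ (n+1) / ((n:ℝ)+1) := by positivity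
    simp only [hF, norm_neg, Real.norm_eq_abs, abs_of_nonneg h0, neg_neg]
  have hnormval : ∀ n : ℕ, ∫ x in Ioi (0:ℝ), ‖F n x‖ = 1/(((n:ℝ)+1)^2*a) := by
    intro n
    rw [setIntegral_congr_fun measurableSet_Ioi (fun x hx => hnorm n x hx), integral_neg, hval n,
      neg_neg]
  have hsummable : Summable (fun n : ℕ => (1:ℝ)/(((n:ℝ)+1)^2*a)) := by
    apply Summable.congr (basel_shift.summable.mul_right (1/a))
    intro n
    rw [div_mul_div_comm, one_mul]
  have hsumnorm : Summable (fun n : ℕ => ∫ x in Ioi (0:ℝ), ‖F n x‖) := by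
    exact Summable.congr hsummable (fun n => (hnormval n).symm)
  have htsum : HasSum (fun n : ℕ => -(1/(((n:ℝ)+1)^2*a))) (-(π^2/(6*a))) := by
    have h := (basel_shift.mul_right (1/a)).neg
    have he : (fun n : ℕ => -((1:ℝ)/(((n:ℝ)+1)^2*a)))
        = fun n : ℕ => -((1:ℝ)/((n:ℝ)+1)^2 * (1/a)) := by
      funext n; rw [div_mul_div_comm, one_mul]
    rw [he, show -(π^2/(6*a)) = -(π^2/6 * (1/a)) by ring]
    exact h
  -- integrability
  have hmeas : AEStronglyMeasurable f (volume.restrict (Ioi 0)) := by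
    apply Measurable.aestronglyMeasurable
    exact (measurable_const.sub ((measurable_id.const_mul a).neg.exp)).log
  have hint : IntegrableOn f (Set.Ioi 0) := by
    refine ⟨hmeas, ?_⟩
    have key : ∀ x ∈ Ioi (0:ℝ), (‖f x‖₊ : ℝ≥0∞) = ∑' n, (‖F n x‖₊ : ℝ≥0∞) := by
      intro x hx
      have h1 := hsum x hx
      have hx0 : 0 < a * x := mul_pos ha hx
      have hexp1 : Real.exp (-(a*x)) < 1 := Real.exp_lt_one_iff.mpr (by linarith)
      have hfle : f x ≤ 0 := by
        apply Real.log_nonpos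
        · linarith
        · linarith [(Real.exp_pos (-(a*x))).le]
      have hfn : (fun n => ‖F n x‖) = fun n => -(F n x) := funext (fun n => hnorm n x hx)
      have h2 : HasSum (fun n => ‖F n x‖) ‖f x‖ := by
        rw [hfn, Real.norm_eq_abs, abs_of_nonpos hfle]
        exact h1.neg
      calc (‖f x‖₊ : ℝ≥0∞) = ENNReal.ofReal ‖f x‖ := (ofReal_norm _).symm
        _ = ENNReal.ofReal (∑' n, ‖F n x‖) := by rw [h2.tsum_eq]
        _ = ∑' n, ENNReal.ofReal ‖F n x‖ :=
            ENNReal.ofReal_tsum_of_nonneg (fun n => norm_nonneg _) h2.summable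
        _ = ∑' n, (‖F n x‖₊ : ℝ≥0∞) := tsum_congr fun n => ofReal_norm _
    have hcalc : ∫⁻ x in Ioi (0:ℝ), (‖f x‖₊ : ℝ≥0∞)
        = ENNReal.ofReal (∑' n : ℕ, 1/(((n:ℝ)+1)^2*a)) := by
      erw [setLIntegral_congr_fun measurableSet_Ioi key,
        lintegral_tsum (fun n => (hFi n).aestronglyMeasurable.enorm)]
      have h3 : ∀ n : ℕ, ∫⁻ x in Ioi (0:ℝ), (‖F n x‖₊ : ℝ≥0∞)
          = ENNReal.ofReal (1/(((n:ℝ)+1)^2*a)) := by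
        intro n
        erw [← ofReal_integral_norm_eq_lintegral_enorm (hFi n), hnormval n]
      erw [tsum_congr h3, ← ENNReal.ofReal_tsum_of_nonneg (fun n => by positivity) hsummable]
    unfold HasFiniteIntegral
    erw [hcalc]
    exact ENNReal.ofReal_lt_top
  refine ⟨hint, ?_⟩
  have hint_eq : ∫ x in Ioi (0:ℝ), f x = ∫ x in Ioi (0:ℝ), ∑' n, F n x :=
    setIntegral_congr_fun measurableSet_Ioi (fun x hx => ((hsum x hx).tsum_eq).symm)
  have hswap := MeasureTheory.integral_tsum_of_summable_integral_norm
    (μ := volume.restrict (Ioi 0)) (fun n => hFi n) hsumnorm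
  rw [hint_eq, ← hswap, tsum_congr hval, htsum.tsum_eq]

lemma ptwise {x : ℝ} (hx : 0 < x) :
    Real.log (1 - 1 / Real.cosh x)
      = 2 * Real.log (1 - Real.exp (-(1*x))) + Real.log (1 - Real.exp (-(2*x)))
        - Real.log (1 - Real.exp (-(4*x))) := by
  set t := Real.exp (-x) with ht
  have ht0 : 0 < t := Real.exp_pos _
  have ht1 : t < 1 := Real.exp_lt_one_iff.mpr (by linarith)
  have h1x : Real.exp (-(1*x)) = t := by rw [ht]; norm_num
  have h2 : Real.exp (-(2*x)) = t^2 := by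
    rw [ht, ← Real.exp_nat_mul]; push_cast; ring_nf
  have h4 : Real.exp (-(4*x)) = t^4 := by
    rw [ht, ← Real.exp_nat_mul]; push_cast; ring_nf
  have p1 : (0:ℝ) < 1 - t := by linarith
  have p2 : (0:ℝ) < 1 - t^2 := by nlinarith
  have p4 : (0:ℝ) < 1 - t^4 := by nlinarith
  have hex : Real.exp x = t⁻¹ := by
    rw [ht, Real.exp_neg, inv_inv]
  have hcosh : 1 - 1/Real.cosh x = (1-t)^2 * (1-t^2) / (1-t^4) := by
    rw [Real.cosh_eq, hex, ht]
    rw [← ht]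
    have hden : t⁻¹ + t > 0 := by positivity
    field_simp
    ring
  rw [hcosh, h1x, h2, h4]
  rw [Real.log_div (by positivity) p4.ne', Real.log_mul (by positivity) p2.ne',
    Real.log_pow]
  push_cast; ring

theorem stmt_9 :
    (∫ x in Set.Ioi (0:ℝ), Real.log (1 - 1 / Real.cosh x))
      = -(3 * Real.pi ^ 2 / 8) := by
  have h1 := J 1 one_pos
  have h2 := J 2 two_pos
  have h4 := J 4 (by norm_num)
  have hcong : ∀ x ∈ Set.Ioi (0:ℝ),
      Real.log (1 - 1 / Real.cosh x)
        = 2 * Real.log (1 - Real.exp (-(1*x))) + Real.log (1 - Real.exp (-(2*x)))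
          - Real.log (1 - Real.exp (-(4*x))) := fun x hx => ptwise hx
  have hA : IntegrableOn (fun x => 2 * Real.log (1 - Real.exp (-(1*x)))
      + Real.log (1 - Real.exp (-(2*x)))) (Set.Ioi 0) :=
    (h1.1.const_mul 2).add h2.1
  rw [setIntegral_congr_fun measurableSet_Ioi hcong,
    integral_sub hA h4.1,
    integral_add (h1.1.const_mul 2) h2.1,
    MeasureTheory.integral_const_mul, h1.2, h2.2, h4.2]
  ring
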